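/- arXiv:cs/0502043 — 2 statements merged into one kernel-verified Lean document; each statement's English description precedes it below -/
import Mathlib

section
/- Let S = {p_1, ..., p_n} be points sorted by strictly increasing y-coordinate. Then there exists a point p_L with x-coordinate sufficiently negative such that no segment p_L p_i crosses any segment p_j p_{j+1} (for consecutive indices) and no two segments p_L p_i and p_L p_j cross except at p_L. -/
private lemma es_ext {z w : EuclideanSpace ℝ (Fin 2)} (h0 : z 0 = w 0) (h1 : z 1 = w 1) :
    z = w := by
  refine PiLp.ext ?_; intro t; fin_cases t <;> assumption

set_option maxHeartbeats 1000000

/-- The key geometric step of Theorem 2.4: given points `p 0, …, p (n-1)` sorted by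
strictly increasing `y`-coordinate, there is a point `p_L` (placed sufficiently far
to the left) such that the segments from `p_L` to each point, together with the
segments between vertically consecutive points, pairwise meet only at shared
endpoints. -/
theorem exists_left_fan_point (n : ℕ) (p : Fin n → EuclideanSpace ℝ (Fin 2))
    (hy : ∀ i j : Fin n, i < j → p i 1 < p j 1) :
    ∃ pL : EuclideanSpace ℝ (Fin 2),
      (∀ i : Fin n, pL ≠ p i) ∧
      (∀ (i j : Fin n) (hj : (j : ℕ) + 1 < n),
        segment ℝ pL (p i) ∩ segment ℝ (p j) (p ⟨(j : ℕ) + 1, hj⟩) ⊆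
          {p i} ∩ ({p j} ∪ {p ⟨(j : ℕ) + 1, hj⟩})) ∧
      (∀ i j : Fin n, i ≠ j → segment ℝ pL (p i) ∩ segment ℝ pL (p j) = {pL}) := by
  rcases Nat.eq_zero_or_pos n with h0 | hn
  · subst h0
    exact ⟨0, fun i => i.elim0, fun i => i.elim0, fun i => i.elim0⟩
  -- choose X far to the left
  set g : Fin n × Fin n → ℝ := fun q =>
    min (p q.1 0)
      (if p q.1 1 < p q.2 1 then
        (p q.1 0 * p q.2 1 - p q.1 1 * p q.2 0) / (p q.2 1 - p q.1 1) else 0) with hg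
  have hne : (Finset.univ : Finset (Fin n × Fin n)).Nonempty :=
    ⟨(⟨0, hn⟩, ⟨0, hn⟩), Finset.mem_univ _⟩
  set X : ℝ := Finset.univ.inf' hne g - 1 with hXdef
  have hX : ∀ q : Fin n × Fin n, X < g q := by
    intro q
    have hle : Finset.univ.inf' hne g ≤ g q := Finset.inf'_le g (Finset.mem_univ q)
    simp only [hXdef]; linarith
  have hXx : ∀ i : Fin n, X < p i 0 := fun i =>
    lt_of_lt_of_le (hX (i, i)) (min_le_left _ _)
  -- the determinant sign lemma
  have hD : ∀ i k : Fin n, i < k →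
      0 < (p i 0 - X) * p k 1 - p i 1 * (p k 0 - X) := by
    intro i k hik
    have hy' := hy i k hik
    have h2 : X < (p i 0 * p k 1 - p i 1 * p k 0) / (p k 1 - p i 1) := by
      have := lt_of_lt_of_le (hX (i, k)) (min_le_right _ _)
      simpa [hy'] using this
    rw [lt_div_iff₀ (by linarith)] at h2
    nlinarith [h2]
  have hDneg : ∀ i k : Fin n, k < i →
      (p i 0 - X) * p k 1 - p i 1 * (p k 0 - X) < 0 := by
    intro i k hki
    have := hD k i hki
    nlinarith [this]
  set pL : EuclideanSpace ℝ (Fin 2) := !₂[X, 0] with hpL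
  have hpL0 : pL 0 = X := by simp [hpL]
  have hpL1 : pL 1 = (0 : ℝ) := by simp [hpL]
  refine ⟨pL, ?_, ?_, ?_⟩
  · -- pL ≠ p i
    intro i h
    have := congrArg (· 0) h
    rw [hpL0] at this
    exact absurd this (ne_of_lt (hXx i))
  · -- segments from pL vs chain segments
    intro i j hj z hz
    obtain ⟨hz1, hz2⟩ := hz
    set j1 : Fin n := ⟨(j : ℕ) + 1, hj⟩ with hj1
    obtain ⟨a, b, ha, hb, hab, hzab⟩ := hz1
    obtain ⟨c, d, hc, hd, hcd, hzcd⟩ := hz2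
    have A0 : a * X + b * p i 0 = z 0 := by
      have := congrArg (· 0) hzab
      simpa [PiLp.add_apply, PiLp.smul_apply, hpL0] using this
    have A1 : b * p i 1 = z 1 := by
      have := congrArg (· 1) hzab
      simpa [PiLp.add_apply, PiLp.smul_apply, hpL1] using this
    have C0 : c * p j 0 + d * p j1 0 = z 0 := by
      have := congrArg (· 0) hzcd
      simpa [PiLp.add_apply, PiLp.smul_apply] using this
    have C1 : c * p j 1 + d * p j1 1 = z 1 := by
      have := congrArg (· 1) hzcd
      simpa [PiLp.add_apply, PiLp.smul_apply] using this
    have hkey : c * ((p i 0 - X) * p j 1 - p i 1 * (p j 0 - X))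
        + d * ((p i 0 - X) * p j1 1 - p i 1 * (p j1 0 - X)) = 0 := by
      linear_combination (p i 0 - X) * C1 - p i 1 * C0 + X * p i 1 * hcd
        - (p i 0 - X) * A1 + p i 1 * A0 - X * p i 1 * hab
    have hij1lt : ((j : ℕ) : ℕ) < (j1 : ℕ) := by simp [hj1]
    simp only [Set.mem_inter_iff, Set.mem_singleton_iff, Set.mem_union]
    rcases lt_trichotomy (i : ℕ) (j : ℕ) with h | h | h
    · -- i < j : both determinants positive, contradiction
      have hij : i < j := h
      have hij' : i < j1 := by
        rw [Fin.lt_def]; simp [hj1]; omega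
      have hP := hD i j hij
      have hQ := hD i j1 hij'
      exfalso
      rcases hc.eq_or_lt with hc0 | hc0
      · have hd1 : d = 1 := by linarith
        rw [← hc0, hd1] at hkey
        linarith [hkey, hQ]
      · linarith [hkey, mul_pos hc0 hP, mul_nonneg hd hQ.le]
    · -- i = j
      have hij : i = j := Fin.ext h
      subst hij
      have hij' : i < j1 := by rw [Fin.lt_def]; simp [hj1]
      have hQ := hD i j1 hij'
      have hd0 : d = 0 := by
        have hdle : d ≤ 0 := by nlinarith [hkey, hQ]
        linarith
      have hc1 : c = 1 := by linarith
      rw [hd0, hc1] at C0 C1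
      have hz0 : z 0 = p i 0 := by linarith
      have hz1 : z 1 = p i 1 := by linarith
      have hzp : z = p i := es_ext hz0 hz1
      exact ⟨hzp, Or.inl hzp⟩
    · rcases eq_or_lt_of_le (Nat.succ_le_of_lt h) with h' | h'
      · -- i = j + 1
        have hij : i = j1 := Fin.ext (by simp [hj1]; omega)
        subst hij
        have hji : j < j1 := by rw [Fin.lt_def]; simp [hj1]
        have hP := hDneg j1 j hji
        have hc0 : c = 0 := by
          have hcle : c ≤ 0 := by nlinarith [hkey, hP]
          linarith
        have hd1 : d = 1 := by linarith
        rw [hc0, hd1] at C0 C1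
        have hz0 : z 0 = p j1 0 := by linarith
        have hz1 : z 1 = p j1 1 := by linarith
        have hzp : z = p j1 := es_ext hz0 hz1
        exact ⟨hzp, Or.inr hzp⟩
      · -- j + 1 < i : both determinants negative, contradiction
        have hji : j < i := by rw [Fin.lt_def]; omega
        have hji' : j1 < i := by rw [Fin.lt_def]; simp [hj1]; omega
        have hP := hDneg i j hji
        have hQ := hDneg i j1 hji'
        exfalso
        rcases hc.eq_or_lt with hc0 | hc0
        · have hd1 : d = 1 := by linarith
          rw [← hc0, hd1] at hkey
          linarith [hkey, hQ]
        · have h1 : c * ((p i 0 - X) * p j 1 - p i 1 * (p j 0 - X)) < 0 :=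
            mul_neg_of_pos_of_neg hc0 hP
          have h2 : d * ((p i 0 - X) * p j1 1 - p i 1 * (p j1 0 - X)) ≤ 0 :=
            mul_nonpos_iff.mpr (Or.inl ⟨hd, hQ.le⟩)
          linarith [hkey]
  · -- segments from pL pairwise meet only at pL
    intro i j hij
    have hDne : (p i 0 - X) * p j 1 - p i 1 * (p j 0 - X) ≠ 0 := by
      rcases lt_or_gt_of_ne hij with h | h
      · exact ne_of_gt (hD i j h)
      · have := hD j i h
        intro h0; nlinarith [this]
    ext z
    simp only [Set.mem_inter_iff, Set.mem_singleton_iff]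
    constructor
    · rintro ⟨hz1, hz2⟩
      obtain ⟨a, b, ha, hb, hab, hzab⟩ := hz1
      obtain ⟨c, d, hc, hd, hcd, hzcd⟩ := hz2
      have A0 : a * X + b * p i 0 = z 0 := by
        have := congrArg (· 0) hzab
        simpa [PiLp.add_apply, PiLp.smul_apply, hpL0] using this
      have A1 : b * p i 1 = z 1 := by
        have := congrArg (· 1) hzab
        simpa [PiLp.add_apply, PiLp.smul_apply, hpL1] using this
      have C0 : c * X + d * p j 0 = z 0 := by
        have := congrArg (· 0) hzcd
        simpa [PiLp.add_apply, PiLp.smul_apply, hpL0] using this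
      have C1 : d * p j 1 = z 1 := by
        have := congrArg (· 1) hzcd
        simpa [PiLp.add_apply, PiLp.smul_apply, hpL1] using this
      have hb0 : b * ((p i 0 - X) * p j 1 - p i 1 * (p j 0 - X)) = 0 := by
        linear_combination X * p j 1 * hcd - p j 1 * C0 + (p j 0 - X) * C1
          + p j 1 * A0 - X * p j 1 * hab - (p j 0 - X) * A1
      have hb' : b = 0 := (mul_eq_zero.mp hb0).resolve_right hDne
      have ha1 : a = 1 := by linarith
      rw [hb', ha1] at A0
      rw [hb'] at A1
      refine es_ext ?_ ?_
      · rw [hpL0]; linarith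
      · rw [hpL1]; linarith
    · rintro rfl
      exact ⟨left_mem_segment ℝ pL (p i), left_mem_segment ℝ pL (p j)⟩
end

section
/- For any point p in the interior of a triangle T = Δ(a,b,c), the six triangles obtained by extending the three lines through p and each vertex of T (the subdivision of T at p) have pairwise disjoint interiors and cover T. -/
noncomputable section

abbrev Pt : Type := EuclideanSpace ℝ (Fin 2)

open Set

lemma aff_comb3 (f : Pt →ᵃ[ℝ] ℝ) {s t r : ℝ} (h : s + t + r = 1) (x y z : Pt) :
    f (s • x + t • y + r • z) = s * f x + t * f y + r * f z := by
  have he : s • x + t • y + r • z = (s • (x - y) + r • (z - y)) +ᵥ y := by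
    have ht : t = 1 - s - r := by linarith
    subst ht
    simp only [smul_sub, sub_smul, one_smul, vadd_eq_add]
    abel
  have h1 : f.linear (x - y) = f x - f y := by
    rw [← vsub_eq_sub, f.linearMap_vsub, vsub_eq_sub]
  have h2 : f.linear (z - y) = f z - f y := by
    rw [← vsub_eq_sub, f.linearMap_vsub, vsub_eq_sub]
  rw [he, f.map_vadd]
  simp only [map_add, map_smul, vadd_eq_add, smul_eq_mul, h1, h2]
  linear_combination (-(f y)) * h

lemma interior_halfspace_lt (F : Pt →ᵃ[ℝ] ℝ) (v : Pt) (hv : F.linear v ≠ 0)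
    {x : Pt} (hx : x ∈ interior {y : Pt | F y ≤ 0}) : F x < 0 := by
  obtain ⟨ε, hε, hball⟩ := Metric.mem_nhds_iff.1 (mem_interior_iff_mem_nhds.1 hx)
  have hv0 : v ≠ 0 := by rintro rfl; simp at hv
  have hnv : (0:ℝ) < ‖v‖ := norm_pos_iff.2 hv0
  set d : ℝ := if 0 < F.linear v then 1 else -1 with hd
  have hdF : 0 < d * F.linear v := by
    rcases lt_trichotomy (F.linear v) 0 with h | h | h
    · have : d = -1 := by rw [hd]; simp [not_lt.2 h.le]
      rw [this]; nlinarith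
    · exact absurd h hv
    · have : d = 1 := by rw [hd]; simp [h]
      rw [this]; nlinarith
  set cc : ℝ := ε / (2 * ‖v‖) * d with hcc
  have hccv : |cc| * ‖v‖ = ε / 2 := by
    rw [hcc, abs_mul]
    have : |d| = 1 := by rw [hd]; split <;> simp
    rw [this, abs_of_pos (by positivity)]
    field_simp
  have hy : (cc • v + x) ∈ Metric.ball x ε := by
    rw [Metric.mem_ball, dist_eq_norm]
    simp only [add_sub_cancel_right]
    rw [norm_smul, Real.norm_eq_abs, hccv]
    linarith
  have hFy : F (cc • v + x) ≤ 0 := hball hy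
  have : F (cc • v + x) = cc * F.linear v + F x := by
    have := F.map_vadd x (cc • v)
    simpa [vadd_eq_add, smul_eq_mul] using this
  rw [this] at hFy
  have hpos : 0 < cc * F.linear v := by
    rw [hcc, mul_assoc]
    positivity
  linarith

lemma disj_halfspaces (F : Pt →ᵃ[ℝ] ℝ) (v : Pt) (hv : F.linear v ≠ 0)
    {S U : Set Pt} (hs : S ⊆ {y | F y ≤ 0}) (hu : U ⊆ {y | 0 ≤ F y}) :
    interior S ∩ interior U = ∅ := by
  ext x
  simp only [mem_inter_iff, mem_empty_iff_false, iff_false, not_and]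
  intro h1 h2
  have l1 : F x < 0 := interior_halfspace_lt F v hv (interior_mono hs h1)
  have l2 : (-F) x < 0 := by
    refine interior_halfspace_lt (-F) v ?_ (interior_mono ?_ h2)
    · simpa using hv
    · intro y hy
      have h0 : (0:ℝ) ≤ F y := hu hy
      simp only [mem_setOf_eq, AffineMap.coe_neg, Pi.neg_apply]
      linarith
  rw [AffineMap.coe_neg, Pi.neg_apply] at l2
  linarith

lemma mem_hull3 (s t r : ℝ) {x y z q : Pt} (hs : 0 ≤ s) (ht : 0 ≤ t) (hr : 0 ≤ r)
    (hsum : s + t + r = 1) (hq : q = s • x + t • y + r • z) :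
    q ∈ convexHull ℝ ({x, y, z} : Set Pt) := by
  have hconv : Convex ℝ (convexHull ℝ ({x, y, z} : Set Pt)) := convex_convexHull ℝ _
  have hx : x ∈ convexHull ℝ ({x, y, z} : Set Pt) := subset_convexHull ℝ _ (by simp)
  have hy : y ∈ convexHull ℝ ({x, y, z} : Set Pt) := subset_convexHull ℝ _ (by simp)
  have hz : z ∈ convexHull ℝ ({x, y, z} : Set Pt) := subset_convexHull ℝ _ (by simp)
  rcases eq_or_lt_of_le (show (0:ℝ) ≤ t + r by linarith) with h | h
  · have ht0 : t = 0 := by linarith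
    have hr0 : r = 0 := by linarith
    have hs1 : s = 1 := by linarith
    rw [hq, ht0, hr0, hs1]
    simpa using hx
  · have hm : (t / (t + r)) • y + (r / (t + r)) • z ∈ convexHull ℝ ({x, y, z} : Set Pt) := by
      refine hconv hy hz (by positivity) (by positivity) ?_
      field_simp
    have heq : q = s • x + (t + r) • ((t / (t + r)) • y + (r / (t + r)) • z) := by
      rw [hq, smul_add, smul_smul, smul_smul]
      have e1 : (t + r) * (t / (t + r)) = t := by field_simp
      have e2 : (t + r) * (r / (t + r)) = r := by field_simp
      rw [e1, e2, add_assoc]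
    rw [heq]
    exact hconv hx hm hs h.le (by linarith)

lemma cevian_coord (f g : Pt →ᵃ[ℝ] ℝ) (av pv xv : Pt)
    (hfa : f av = 1) (hga : g av = 0) (hfx : f xv = 0)
    (hcol : Collinear ℝ ({av, pv, xv} : Set Pt)) :
    g xv * (1 - f pv) = g pv := by
  rw [collinear_iff_of_mem (mem_insert av _)] at hcol
  obtain ⟨v, hv⟩ := hcol
  obtain ⟨r1, hp1⟩ := hv pv (by simp)
  obtain ⟨r2, hx1⟩ := hv xv (by simp)
  have ef : ∀ (h : Pt →ᵃ[ℝ] ℝ) (rr : ℝ), h (rr • v +ᵥ av) = rr * h.linear v + h av := by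
    intro h rr
    rw [h.map_vadd]
    simp [smul_eq_mul, vadd_eq_add]
  have E1 : f pv = r1 * f.linear v + 1 := by rw [hp1, ef, hfa]
  have E2 : (0:ℝ) = r2 * f.linear v + 1 := by rw [← hfx, hx1, ef, hfa]
  have E3 : g pv = r1 * g.linear v := by rw [hp1, ef, hga, add_zero]
  have E4 : g xv = r2 * g.linear v := by rw [hx1, ef, hga, add_zero]
  rw [E4, E3, E1]
  linear_combination (r1 * g.linear v) * E2

lemma hull3_le (F : Pt →ᵃ[ℝ] ℝ) {x y z : Pt} (h1 : F x ≤ 0) (h2 : F y ≤ 0) (h3 : F z ≤ 0) :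
    convexHull ℝ ({x, y, z} : Set Pt) ⊆ {w | F w ≤ 0} := by
  have hc : Convex ℝ {w : Pt | F w ≤ 0} := by
    have : {w : Pt | F w ≤ 0} = F ⁻¹' (Iic 0) := rfl
    rw [this]
    exact (convex_Iic (0:ℝ)).affine_preimage F
  apply convexHull_min _ hc
  rintro w hw
  simp only [mem_insert_iff, mem_singleton_iff] at hw
  rcases hw with rfl | rfl | rfl <;> assumption

lemma hull3_ge (F : Pt →ᵃ[ℝ] ℝ) {x y z : Pt} (h1 : 0 ≤ F x) (h2 : 0 ≤ F y) (h3 : 0 ≤ F z) :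
    convexHull ℝ ({x, y, z} : Set Pt) ⊆ {w | 0 ≤ F w} := by
  have hc : Convex ℝ {w : Pt | 0 ≤ F w} := by
    have : {w : Pt | 0 ≤ F w} = F ⁻¹' (Ici 0) := rfl
    rw [this]
    exact (convex_Ici (0:ℝ)).affine_preimage F
  apply convexHull_min _ hc
  rintro w hw
  simp only [mem_insert_iff, mem_singleton_iff] at hw
  rcases hw with rfl | rfl | rfl <;> assumption

set_option maxHeartbeats 4000000 in
/-- Subdivision (Definition 3.2): for `p` interior to the triangle `T = Δ(a,b,c)`,
the three lines through `p` and each vertex of `T` meet the opposite sides at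
points `a' ∈ bc`, `b' ∈ ca`, `c' ∈ ab`, and the six resulting triangles have
pairwise disjoint interiors and cover `T`. -/
theorem subdivision_six_triangles (a b c p a' b' c' : Pt)
    (hind : AffineIndependent ℝ ![a, b, c])
    (hp : p ∈ interior (convexHull ℝ ({a, b, c} : Set Pt)))
    (ha' : a' ∈ segment ℝ b c) (hca : Collinear ℝ ({a, p, a'} : Set Pt))
    (hb' : b' ∈ segment ℝ c a) (hcb : Collinear ℝ ({b, p, b'} : Set Pt))
    (hc' : c' ∈ segment ℝ a b) (hcc : Collinear ℝ ({c, p, c'} : Set Pt)) :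
    ∃ t : Fin 6 → Set Pt,
      t 0 = convexHull ℝ ({p, a, c'} : Set Pt) ∧
      t 1 = convexHull ℝ ({p, c', b} : Set Pt) ∧
      t 2 = convexHull ℝ ({p, b, a'} : Set Pt) ∧
      t 3 = convexHull ℝ ({p, a', c} : Set Pt) ∧
      t 4 = convexHull ℝ ({p, c, b'} : Set Pt) ∧
      t 5 = convexHull ℝ ({p, b', a} : Set Pt) ∧
      (∀ i j : Fin 6, i ≠ j → interior (t i) ∩ interior (t j) = ∅) ∧
      (⋃ i, t i) = convexHull ℝ ({a, b, c} : Set Pt) := by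
  classical
  have htop : affineSpan ℝ (Set.range ![a, b, c]) = ⊤ := by
    rw [hind.affineSpan_eq_top_iff_card_eq_finrank_add_one]
    simp [finrank_euclideanSpace_fin]
  let B : AffineBasis (Fin 3) ℝ Pt := ⟨![a, b, c], hind, htop⟩
  have hrange : Set.range (B : Fin 3 → Pt) = ({a, b, c} : Set Pt) := by
    show Set.range ![a, b, c] = _
    ext y
    simp [Matrix.range_cons, Matrix.range_empty]
    tauto
  have hcv : ∀ i j : Fin 3, B.coord i (![a, b, c] j) = if i = j then 1 else 0 :=
    fun i j => B.coord_apply i j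
  have h0a : B.coord 0 a = 1 := by simpa using hcv 0 0
  have h1a : B.coord 1 a = 0 := by simpa using hcv 1 0
  have h2a : B.coord 2 a = 0 := by simpa using hcv 2 0
  have h0b : B.coord 0 b = 0 := by simpa using hcv 0 1
  have h1b : B.coord 1 b = 1 := by simpa using hcv 1 1
  have h2b : B.coord 2 b = 0 := by simpa using hcv 2 1
  have h0c : B.coord 0 c = 0 := by simpa using hcv 0 2
  have h1c : B.coord 1 c = 0 := by simpa using hcv 1 2
  have h2c : B.coord 2 c = 1 := by simpa using hcv 2 2
  have hhull : convexHull ℝ ({a, b, c} : Set Pt) = {x | ∀ i, 0 ≤ B.coord i x} := by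
    rw [← hrange, B.convexHull_eq_nonneg_coord]
  have hpos : ∀ i, 0 < B.coord i p := by
    have h2 := B.interior_convexHull
    rw [hrange] at h2
    rw [h2] at hp
    exact hp
  have hp0 : 0 < B.coord 0 p := hpos 0
  have hp1 : 0 < B.coord 1 p := hpos 1
  have hp2 : 0 < B.coord 2 p := hpos 2
  have hpsum : B.coord 0 p + B.coord 1 p + B.coord 2 p = 1 := by
    have := B.sum_coord_apply_eq_one p
    rw [Fin.sum_univ_three] at this
    exact this
  have hm0 : 0 < 1 - B.coord 0 p := by linarith
  have hm1 : 0 < 1 - B.coord 1 p := by linarith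
  have hm2 : 0 < 1 - B.coord 2 p := by linarith
  have hpm : p ∈ convexHull ℝ ({a, b, c} : Set Pt) := interior_subset hp
  have ham : a ∈ convexHull ℝ ({a, b, c} : Set Pt) := subset_convexHull ℝ _ (by simp)
  have hbm : b ∈ convexHull ℝ ({a, b, c} : Set Pt) := subset_convexHull ℝ _ (by simp)
  have hcm : c ∈ convexHull ℝ ({a, b, c} : Set Pt) := subset_convexHull ℝ _ (by simp)
  have hAm : a' ∈ convexHull ℝ ({a, b, c} : Set Pt) :=
    segment_subset_convexHull (by simp) (by simp) ha'
  have hBm : b' ∈ convexHull ℝ ({a, b, c} : Set Pt) :=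
    segment_subset_convexHull (by simp) (by simp) hb'
  have hCm : c' ∈ convexHull ℝ ({a, b, c} : Set Pt) :=
    segment_subset_convexHull (by simp) (by simp) hc'

  obtain ⟨kA, lA, hkA, hlA, hklA, hkeA⟩ := ha'
  have heA : a' = kA • b + lA • c + (0:ℝ) • a := by
    rw [← hkeA]; simp
  have hA0 : B.coord 0 a' = 0 := by
    rw [heA, aff_comb3 (B.coord 0) (show kA + lA + 0 = 1 by linarith) b c a,
      h0b, h0c, h0a]
    ring
  have hA1aux : B.coord 1 a' * (1 - B.coord 0 p) = B.coord 1 p :=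
    cevian_coord (B.coord 0) (B.coord 1) a p a' h0a h1a hA0 hca
  have hA1 : B.coord 1 a' = B.coord 1 p / (1 - B.coord 0 p) := by
    rw [eq_div_iff hm0.ne']
    exact hA1aux
  have hA2aux : B.coord 2 a' * (1 - B.coord 0 p) = B.coord 2 p :=
    cevian_coord (B.coord 0) (B.coord 2) a p a' h0a h2a hA0 hca
  have hA2 : B.coord 2 a' = B.coord 2 p / (1 - B.coord 0 p) := by
    rw [eq_div_iff hm0.ne']
    exact hA2aux
  obtain ⟨kB, lB, hkB, hlB, hklB, hkeB⟩ := hb'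
  have heB : b' = kB • c + lB • a + (0:ℝ) • b := by
    rw [← hkeB]; simp
  have hB1 : B.coord 1 b' = 0 := by
    rw [heB, aff_comb3 (B.coord 1) (show kB + lB + 0 = 1 by linarith) c a b,
      h1c, h1a, h1b]
    ring
  have hB2aux : B.coord 2 b' * (1 - B.coord 1 p) = B.coord 2 p :=
    cevian_coord (B.coord 1) (B.coord 2) b p b' h1b h2b hB1 hcb
  have hB2 : B.coord 2 b' = B.coord 2 p / (1 - B.coord 1 p) := by
    rw [eq_div_iff hm1.ne']
    exact hB2aux
  have hB0aux : B.coord 0 b' * (1 - B.coord 1 p) = B.coord 0 p :=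
    cevian_coord (B.coord 1) (B.coord 0) b p b' h1b h0b hB1 hcb
  have hB0 : B.coord 0 b' = B.coord 0 p / (1 - B.coord 1 p) := by
    rw [eq_div_iff hm1.ne']
    exact hB0aux
  obtain ⟨kC, lC, hkC, hlC, hklC, hkeC⟩ := hc'
  have heC : c' = kC • a + lC • b + (0:ℝ) • c := by
    rw [← hkeC]; simp
  have hC2 : B.coord 2 c' = 0 := by
    rw [heC, aff_comb3 (B.coord 2) (show kC + lC + 0 = 1 by linarith) a b c,
      h2a, h2b, h2c]
    ring
  have hC0aux : B.coord 0 c' * (1 - B.coord 2 p) = B.coord 0 p :=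
    cevian_coord (B.coord 2) (B.coord 0) c p c' h2c h0c hC2 hcc
  have hC0 : B.coord 0 c' = B.coord 0 p / (1 - B.coord 2 p) := by
    rw [eq_div_iff hm2.ne']
    exact hC0aux
  have hC1aux : B.coord 1 c' * (1 - B.coord 2 p) = B.coord 1 p :=
    cevian_coord (B.coord 2) (B.coord 1) c p c' h2c h1c hC2 hcc
  have hC1 : B.coord 1 c' = B.coord 1 p / (1 - B.coord 2 p) := by
    rw [eq_div_iff hm2.ne']
    exact hC1aux
  have hFev : ∀ (r s : ℝ) (i j : Fin 3) (y : Pt),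
      (r • B.coord i - s • B.coord j) y = r * B.coord i y - s * B.coord j y := by
    intro r s i j y
    simp [AffineMap.coe_sub, AffineMap.coe_smul, Pi.sub_apply, Pi.smul_apply, smul_eq_mul]
  have hFlin : ∀ (r s : ℝ) (i j : Fin 3) (y z : Pt),
      (r • B.coord i - s • B.coord j).linear (y - z)
        = (r • B.coord i - s • B.coord j) y - (r • B.coord i - s • B.coord j) z := by
    intro r s i j y z
    have h := AffineMap.linearMap_vsub (r • B.coord i - s • B.coord j) y z
    simpa [vsub_eq_sub] using h
  have eF0p : ((B.coord 2 p) • B.coord 1 - (B.coord 1 p) • B.coord 2) p = 0 := by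
    rw [hFev]
    ring
  have eF0a : ((B.coord 2 p) • B.coord 1 - (B.coord 1 p) • B.coord 2) a = 0 := by
    rw [hFev, h1a, h2a]
    ring
  have eF0b : ((B.coord 2 p) • B.coord 1 - (B.coord 1 p) • B.coord 2) b = B.coord 2 p := by
    rw [hFev, h1b, h2b]
    ring
  have eF0c : ((B.coord 2 p) • B.coord 1 - (B.coord 1 p) • B.coord 2) c = -(B.coord 1 p) := by
    rw [hFev, h1c, h2c]
    ring
  have eF0A : ((B.coord 2 p) • B.coord 1 - (B.coord 1 p) • B.coord 2) a' = 0 := by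
    rw [hFev, hA1, hA2]
    ring
  have eF0B : ((B.coord 2 p) • B.coord 1 - (B.coord 1 p) • B.coord 2) b' = -((B.coord 1 p) * (B.coord 2 p / (1 - B.coord 1 p))) := by
    rw [hFev, hB1, hB2]
    ring
  have eF0C : ((B.coord 2 p) • B.coord 1 - (B.coord 1 p) • B.coord 2) c' = (B.coord 2 p) * (B.coord 1 p / (1 - B.coord 2 p)) := by
    rw [hFev, hC1, hC2]
    ring
  have eF1p : ((B.coord 0 p) • B.coord 2 - (B.coord 2 p) • B.coord 0) p = 0 := by
    rw [hFev]
    ring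
  have eF1b : ((B.coord 0 p) • B.coord 2 - (B.coord 2 p) • B.coord 0) b = 0 := by
    rw [hFev, h2b, h0b]
    ring
  have eF1a : ((B.coord 0 p) • B.coord 2 - (B.coord 2 p) • B.coord 0) a = -(B.coord 2 p) := by
    rw [hFev, h2a, h0a]
    ring
  have eF1c : ((B.coord 0 p) • B.coord 2 - (B.coord 2 p) • B.coord 0) c = B.coord 0 p := by
    rw [hFev, h2c, h0c]
    ring
  have eF1A : ((B.coord 0 p) • B.coord 2 - (B.coord 2 p) • B.coord 0) a' = (B.coord 0 p) * (B.coord 2 p / (1 - B.coord 0 p)) := by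
    rw [hFev, hA2, hA0]
    ring
  have eF1B : ((B.coord 0 p) • B.coord 2 - (B.coord 2 p) • B.coord 0) b' = 0 := by
    rw [hFev, hB2, hB0]
    ring
  have eF1C : ((B.coord 0 p) • B.coord 2 - (B.coord 2 p) • B.coord 0) c' = -((B.coord 2 p) * (B.coord 0 p / (1 - B.coord 2 p))) := by
    rw [hFev, hC2, hC0]
    ring
  have eF2p : ((B.coord 1 p) • B.coord 0 - (B.coord 0 p) • B.coord 1) p = 0 := by
    rw [hFev]
    ring
  have eF2c : ((B.coord 1 p) • B.coord 0 - (B.coord 0 p) • B.coord 1) c = 0 := by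
    rw [hFev, h0c, h1c]
    ring
  have eF2b : ((B.coord 1 p) • B.coord 0 - (B.coord 0 p) • B.coord 1) b = -(B.coord 0 p) := by
    rw [hFev, h0b, h1b]
    ring
  have eF2a : ((B.coord 1 p) • B.coord 0 - (B.coord 0 p) • B.coord 1) a = B.coord 1 p := by
    rw [hFev, h0a, h1a]
    ring
  have eF2A : ((B.coord 1 p) • B.coord 0 - (B.coord 0 p) • B.coord 1) a' = -((B.coord 0 p) * (B.coord 1 p / (1 - B.coord 0 p))) := by
    rw [hFev, hA0, hA1]
    ring
  have eF2B : ((B.coord 1 p) • B.coord 0 - (B.coord 0 p) • B.coord 1) b' = (B.coord 1 p) * (B.coord 0 p / (1 - B.coord 1 p)) := by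
    rw [hFev, hB0, hB1]
    ring
  have eF2C : ((B.coord 1 p) • B.coord 0 - (B.coord 0 p) • B.coord 1) c' = 0 := by
    rw [hFev, hC0, hC1]
    ring

  have sg0_0 : convexHull ℝ ({p, a, c'} : Set Pt) ⊆ {w | 0 ≤ ((B.coord 2 p) • B.coord 1 - (B.coord 1 p) • B.coord 2) w} :=
    hull3_ge ((B.coord 2 p) • B.coord 1 - (B.coord 1 p) • B.coord 2) (by rw [eF0p]) (by rw [eF0a]) (by rw [eF0C]; exact mul_nonneg hp2.le (div_nonneg hp1.le hm2.le))
  have sg0_1 : convexHull ℝ ({p, c', b} : Set Pt) ⊆ {w | 0 ≤ ((B.coord 2 p) • B.coord 1 - (B.coord 1 p) • B.coord 2) w} :=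
    hull3_ge ((B.coord 2 p) • B.coord 1 - (B.coord 1 p) • B.coord 2) (by rw [eF0p]) (by rw [eF0C]; exact mul_nonneg hp2.le (div_nonneg hp1.le hm2.le)) (by rw [eF0b]; exact hp2.le)
  have sg0_2 : convexHull ℝ ({p, b, a'} : Set Pt) ⊆ {w | 0 ≤ ((B.coord 2 p) • B.coord 1 - (B.coord 1 p) • B.coord 2) w} :=
    hull3_ge ((B.coord 2 p) • B.coord 1 - (B.coord 1 p) • B.coord 2) (by rw [eF0p]) (by rw [eF0b]; exact hp2.le) (by rw [eF0A])
  have sl0_3 : convexHull ℝ ({p, a', c} : Set Pt) ⊆ {w | ((B.coord 2 p) • B.coord 1 - (B.coord 1 p) • B.coord 2) w ≤ 0} :=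
    hull3_le ((B.coord 2 p) • B.coord 1 - (B.coord 1 p) • B.coord 2) (by rw [eF0p]) (by rw [eF0A]) (by rw [eF0c]; exact neg_nonpos.2 hp1.le)
  have sl0_4 : convexHull ℝ ({p, c, b'} : Set Pt) ⊆ {w | ((B.coord 2 p) • B.coord 1 - (B.coord 1 p) • B.coord 2) w ≤ 0} :=
    hull3_le ((B.coord 2 p) • B.coord 1 - (B.coord 1 p) • B.coord 2) (by rw [eF0p]) (by rw [eF0c]; exact neg_nonpos.2 hp1.le) (by rw [eF0B]; exact neg_nonpos.2 (mul_nonneg hp1.le (div_nonneg hp2.le hm1.le)))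
  have sl0_5 : convexHull ℝ ({p, b', a} : Set Pt) ⊆ {w | ((B.coord 2 p) • B.coord 1 - (B.coord 1 p) • B.coord 2) w ≤ 0} :=
    hull3_le ((B.coord 2 p) • B.coord 1 - (B.coord 1 p) • B.coord 2) (by rw [eF0p]) (by rw [eF0B]; exact neg_nonpos.2 (mul_nonneg hp1.le (div_nonneg hp2.le hm1.le))) (by rw [eF0a])
  have sg1_2 : convexHull ℝ ({p, b, a'} : Set Pt) ⊆ {w | 0 ≤ ((B.coord 0 p) • B.coord 2 - (B.coord 2 p) • B.coord 0) w} :=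
    hull3_ge ((B.coord 0 p) • B.coord 2 - (B.coord 2 p) • B.coord 0) (by rw [eF1p]) (by rw [eF1b]) (by rw [eF1A]; exact mul_nonneg hp0.le (div_nonneg hp2.le hm0.le))
  have sg1_3 : convexHull ℝ ({p, a', c} : Set Pt) ⊆ {w | 0 ≤ ((B.coord 0 p) • B.coord 2 - (B.coord 2 p) • B.coord 0) w} :=
    hull3_ge ((B.coord 0 p) • B.coord 2 - (B.coord 2 p) • B.coord 0) (by rw [eF1p]) (by rw [eF1A]; exact mul_nonneg hp0.le (div_nonneg hp2.le hm0.le)) (by rw [eF1c]; exact hp0.le)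
  have sg1_4 : convexHull ℝ ({p, c, b'} : Set Pt) ⊆ {w | 0 ≤ ((B.coord 0 p) • B.coord 2 - (B.coord 2 p) • B.coord 0) w} :=
    hull3_ge ((B.coord 0 p) • B.coord 2 - (B.coord 2 p) • B.coord 0) (by rw [eF1p]) (by rw [eF1c]; exact hp0.le) (by rw [eF1B])
  have sl1_5 : convexHull ℝ ({p, b', a} : Set Pt) ⊆ {w | ((B.coord 0 p) • B.coord 2 - (B.coord 2 p) • B.coord 0) w ≤ 0} :=
    hull3_le ((B.coord 0 p) • B.coord 2 - (B.coord 2 p) • B.coord 0) (by rw [eF1p]) (by rw [eF1B]) (by rw [eF1a]; exact neg_nonpos.2 hp2.le)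
  have sl1_0 : convexHull ℝ ({p, a, c'} : Set Pt) ⊆ {w | ((B.coord 0 p) • B.coord 2 - (B.coord 2 p) • B.coord 0) w ≤ 0} :=
    hull3_le ((B.coord 0 p) • B.coord 2 - (B.coord 2 p) • B.coord 0) (by rw [eF1p]) (by rw [eF1a]; exact neg_nonpos.2 hp2.le) (by rw [eF1C]; exact neg_nonpos.2 (mul_nonneg hp2.le (div_nonneg hp0.le hm2.le)))
  have sl1_1 : convexHull ℝ ({p, c', b} : Set Pt) ⊆ {w | ((B.coord 0 p) • B.coord 2 - (B.coord 2 p) • B.coord 0) w ≤ 0} :=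
    hull3_le ((B.coord 0 p) • B.coord 2 - (B.coord 2 p) • B.coord 0) (by rw [eF1p]) (by rw [eF1C]; exact neg_nonpos.2 (mul_nonneg hp2.le (div_nonneg hp0.le hm2.le))) (by rw [eF1b])
  have sg2_4 : convexHull ℝ ({p, c, b'} : Set Pt) ⊆ {w | 0 ≤ ((B.coord 1 p) • B.coord 0 - (B.coord 0 p) • B.coord 1) w} :=
    hull3_ge ((B.coord 1 p) • B.coord 0 - (B.coord 0 p) • B.coord 1) (by rw [eF2p]) (by rw [eF2c]) (by rw [eF2B]; exact mul_nonneg hp1.le (div_nonneg hp0.le hm1.le))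
  have sg2_5 : convexHull ℝ ({p, b', a} : Set Pt) ⊆ {w | 0 ≤ ((B.coord 1 p) • B.coord 0 - (B.coord 0 p) • B.coord 1) w} :=
    hull3_ge ((B.coord 1 p) • B.coord 0 - (B.coord 0 p) • B.coord 1) (by rw [eF2p]) (by rw [eF2B]; exact mul_nonneg hp1.le (div_nonneg hp0.le hm1.le)) (by rw [eF2a]; exact hp1.le)
  have sg2_0 : convexHull ℝ ({p, a, c'} : Set Pt) ⊆ {w | 0 ≤ ((B.coord 1 p) • B.coord 0 - (B.coord 0 p) • B.coord 1) w} :=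
    hull3_ge ((B.coord 1 p) • B.coord 0 - (B.coord 0 p) • B.coord 1) (by rw [eF2p]) (by rw [eF2a]; exact hp1.le) (by rw [eF2C])
  have sl2_1 : convexHull ℝ ({p, c', b} : Set Pt) ⊆ {w | ((B.coord 1 p) • B.coord 0 - (B.coord 0 p) • B.coord 1) w ≤ 0} :=
    hull3_le ((B.coord 1 p) • B.coord 0 - (B.coord 0 p) • B.coord 1) (by rw [eF2p]) (by rw [eF2C]) (by rw [eF2b]; exact neg_nonpos.2 hp0.le)
  have sl2_2 : convexHull ℝ ({p, b, a'} : Set Pt) ⊆ {w | ((B.coord 1 p) • B.coord 0 - (B.coord 0 p) • B.coord 1) w ≤ 0} :=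
    hull3_le ((B.coord 1 p) • B.coord 0 - (B.coord 0 p) • B.coord 1) (by rw [eF2p]) (by rw [eF2b]; exact neg_nonpos.2 hp0.le) (by rw [eF2A]; exact neg_nonpos.2 (mul_nonneg hp0.le (div_nonneg hp1.le hm0.le)))
  have sl2_3 : convexHull ℝ ({p, a', c} : Set Pt) ⊆ {w | ((B.coord 1 p) • B.coord 0 - (B.coord 0 p) • B.coord 1) w ≤ 0} :=
    hull3_le ((B.coord 1 p) • B.coord 0 - (B.coord 0 p) • B.coord 1) (by rw [eF2p]) (by rw [eF2A]; exact neg_nonpos.2 (mul_nonneg hp0.le (div_nonneg hp1.le hm0.le))) (by rw [eF2c])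

  have hl0 : ((B.coord 2 p) • B.coord 1 - (B.coord 1 p) • B.coord 2).linear (b - c) ≠ 0 := by
    rw [hFlin, eF0b, eF0c]
    intro hcon
    rw [sub_neg_eq_add] at hcon
    exact (by positivity : (0:ℝ) < _).ne' hcon
  have hl1 : ((B.coord 0 p) • B.coord 2 - (B.coord 2 p) • B.coord 0).linear (c - a) ≠ 0 := by
    rw [hFlin, eF1c, eF1a]
    intro hcon
    rw [sub_neg_eq_add] at hcon
    exact (by positivity : (0:ℝ) < _).ne' hcon
  have hl2 : ((B.coord 1 p) • B.coord 0 - (B.coord 0 p) • B.coord 1).linear (a - b) ≠ 0 := by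
    rw [hFlin, eF2a, eF2b]
    intro hcon
    rw [sub_neg_eq_add] at hcon
    exact (by positivity : (0:ℝ) < _).ne' hcon

  have hd01 : interior (convexHull ℝ ({p, a, c'} : Set Pt)) ∩ interior (convexHull ℝ ({p, c', b} : Set Pt)) = ∅ := by
    rw [Set.inter_comm]
    exact disj_halfspaces ((B.coord 1 p) • B.coord 0 - (B.coord 0 p) • B.coord 1) (a - b) hl2 sl2_1 sg2_0
  have hd10 : interior (convexHull ℝ ({p, c', b} : Set Pt)) ∩ interior (convexHull ℝ ({p, a, c'} : Set Pt)) = ∅ := by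
    rw [Set.inter_comm]
    exact hd01
  have hd02 : interior (convexHull ℝ ({p, a, c'} : Set Pt)) ∩ interior (convexHull ℝ ({p, b, a'} : Set Pt)) = ∅ := by
    exact disj_halfspaces ((B.coord 0 p) • B.coord 2 - (B.coord 2 p) • B.coord 0) (c - a) hl1 sl1_0 sg1_2
  have hd20 : interior (convexHull ℝ ({p, b, a'} : Set Pt)) ∩ interior (convexHull ℝ ({p, a, c'} : Set Pt)) = ∅ := by
    rw [Set.inter_comm]
    exact hd02
  have hd03 : interior (convexHull ℝ ({p, a, c'} : Set Pt)) ∩ interior (convexHull ℝ ({p, a', c} : Set Pt)) = ∅ := by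
    rw [Set.inter_comm]
    exact disj_halfspaces ((B.coord 2 p) • B.coord 1 - (B.coord 1 p) • B.coord 2) (b - c) hl0 sl0_3 sg0_0
  have hd30 : interior (convexHull ℝ ({p, a', c} : Set Pt)) ∩ interior (convexHull ℝ ({p, a, c'} : Set Pt)) = ∅ := by
    rw [Set.inter_comm]
    exact hd03
  have hd04 : interior (convexHull ℝ ({p, a, c'} : Set Pt)) ∩ interior (convexHull ℝ ({p, c, b'} : Set Pt)) = ∅ := by
    rw [Set.inter_comm]
    exact disj_halfspaces ((B.coord 2 p) • B.coord 1 - (B.coord 1 p) • B.coord 2) (b - c) hl0 sl0_4 sg0_0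
  have hd40 : interior (convexHull ℝ ({p, c, b'} : Set Pt)) ∩ interior (convexHull ℝ ({p, a, c'} : Set Pt)) = ∅ := by
    rw [Set.inter_comm]
    exact hd04
  have hd05 : interior (convexHull ℝ ({p, a, c'} : Set Pt)) ∩ interior (convexHull ℝ ({p, b', a} : Set Pt)) = ∅ := by
    rw [Set.inter_comm]
    exact disj_halfspaces ((B.coord 2 p) • B.coord 1 - (B.coord 1 p) • B.coord 2) (b - c) hl0 sl0_5 sg0_0
  have hd50 : interior (convexHull ℝ ({p, b', a} : Set Pt)) ∩ interior (convexHull ℝ ({p, a, c'} : Set Pt)) = ∅ := by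
    rw [Set.inter_comm]
    exact hd05
  have hd12 : interior (convexHull ℝ ({p, c', b} : Set Pt)) ∩ interior (convexHull ℝ ({p, b, a'} : Set Pt)) = ∅ := by
    exact disj_halfspaces ((B.coord 0 p) • B.coord 2 - (B.coord 2 p) • B.coord 0) (c - a) hl1 sl1_1 sg1_2
  have hd21 : interior (convexHull ℝ ({p, b, a'} : Set Pt)) ∩ interior (convexHull ℝ ({p, c', b} : Set Pt)) = ∅ := by
    rw [Set.inter_comm]
    exact hd12
  have hd13 : interior (convexHull ℝ ({p, c', b} : Set Pt)) ∩ interior (convexHull ℝ ({p, a', c} : Set Pt)) = ∅ := by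
    rw [Set.inter_comm]
    exact disj_halfspaces ((B.coord 2 p) • B.coord 1 - (B.coord 1 p) • B.coord 2) (b - c) hl0 sl0_3 sg0_1
  have hd31 : interior (convexHull ℝ ({p, a', c} : Set Pt)) ∩ interior (convexHull ℝ ({p, c', b} : Set Pt)) = ∅ := by
    rw [Set.inter_comm]
    exact hd13
  have hd14 : interior (convexHull ℝ ({p, c', b} : Set Pt)) ∩ interior (convexHull ℝ ({p, c, b'} : Set Pt)) = ∅ := by
    rw [Set.inter_comm]
    exact disj_halfspaces ((B.coord 2 p) • B.coord 1 - (B.coord 1 p) • B.coord 2) (b - c) hl0 sl0_4 sg0_1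
  have hd41 : interior (convexHull ℝ ({p, c, b'} : Set Pt)) ∩ interior (convexHull ℝ ({p, c', b} : Set Pt)) = ∅ := by
    rw [Set.inter_comm]
    exact hd14
  have hd15 : interior (convexHull ℝ ({p, c', b} : Set Pt)) ∩ interior (convexHull ℝ ({p, b', a} : Set Pt)) = ∅ := by
    rw [Set.inter_comm]
    exact disj_halfspaces ((B.coord 2 p) • B.coord 1 - (B.coord 1 p) • B.coord 2) (b - c) hl0 sl0_5 sg0_1
  have hd51 : interior (convexHull ℝ ({p, b', a} : Set Pt)) ∩ interior (convexHull ℝ ({p, c', b} : Set Pt)) = ∅ := by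
    rw [Set.inter_comm]
    exact hd15
  have hd23 : interior (convexHull ℝ ({p, b, a'} : Set Pt)) ∩ interior (convexHull ℝ ({p, a', c} : Set Pt)) = ∅ := by
    rw [Set.inter_comm]
    exact disj_halfspaces ((B.coord 2 p) • B.coord 1 - (B.coord 1 p) • B.coord 2) (b - c) hl0 sl0_3 sg0_2
  have hd32 : interior (convexHull ℝ ({p, a', c} : Set Pt)) ∩ interior (convexHull ℝ ({p, b, a'} : Set Pt)) = ∅ := by
    rw [Set.inter_comm]
    exact hd23
  have hd24 : interior (convexHull ℝ ({p, b, a'} : Set Pt)) ∩ interior (convexHull ℝ ({p, c, b'} : Set Pt)) = ∅ := by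
    rw [Set.inter_comm]
    exact disj_halfspaces ((B.coord 2 p) • B.coord 1 - (B.coord 1 p) • B.coord 2) (b - c) hl0 sl0_4 sg0_2
  have hd42 : interior (convexHull ℝ ({p, c, b'} : Set Pt)) ∩ interior (convexHull ℝ ({p, b, a'} : Set Pt)) = ∅ := by
    rw [Set.inter_comm]
    exact hd24
  have hd25 : interior (convexHull ℝ ({p, b, a'} : Set Pt)) ∩ interior (convexHull ℝ ({p, b', a} : Set Pt)) = ∅ := by
    rw [Set.inter_comm]
    exact disj_halfspaces ((B.coord 2 p) • B.coord 1 - (B.coord 1 p) • B.coord 2) (b - c) hl0 sl0_5 sg0_2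
  have hd52 : interior (convexHull ℝ ({p, b', a} : Set Pt)) ∩ interior (convexHull ℝ ({p, b, a'} : Set Pt)) = ∅ := by
    rw [Set.inter_comm]
    exact hd25
  have hd34 : interior (convexHull ℝ ({p, a', c} : Set Pt)) ∩ interior (convexHull ℝ ({p, c, b'} : Set Pt)) = ∅ := by
    exact disj_halfspaces ((B.coord 1 p) • B.coord 0 - (B.coord 0 p) • B.coord 1) (a - b) hl2 sl2_3 sg2_4
  have hd43 : interior (convexHull ℝ ({p, c, b'} : Set Pt)) ∩ interior (convexHull ℝ ({p, a', c} : Set Pt)) = ∅ := by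
    rw [Set.inter_comm]
    exact hd34
  have hd35 : interior (convexHull ℝ ({p, a', c} : Set Pt)) ∩ interior (convexHull ℝ ({p, b', a} : Set Pt)) = ∅ := by
    exact disj_halfspaces ((B.coord 1 p) • B.coord 0 - (B.coord 0 p) • B.coord 1) (a - b) hl2 sl2_3 sg2_5
  have hd53 : interior (convexHull ℝ ({p, b', a} : Set Pt)) ∩ interior (convexHull ℝ ({p, a', c} : Set Pt)) = ∅ := by
    rw [Set.inter_comm]
    exact hd35
  have hd45 : interior (convexHull ℝ ({p, c, b'} : Set Pt)) ∩ interior (convexHull ℝ ({p, b', a} : Set Pt)) = ∅ := by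
    rw [Set.inter_comm]
    exact disj_halfspaces ((B.coord 0 p) • B.coord 2 - (B.coord 2 p) • B.coord 0) (c - a) hl1 sl1_5 sg1_4
  have hd54 : interior (convexHull ℝ ({p, b', a} : Set Pt)) ∩ interior (convexHull ℝ ({p, c, b'} : Set Pt)) = ∅ := by
    rw [Set.inter_comm]
    exact hd45

  refine ⟨![convexHull ℝ ({p, a, c'} : Set Pt), convexHull ℝ ({p, c', b} : Set Pt), convexHull ℝ ({p, b, a'} : Set Pt), convexHull ℝ ({p, a', c} : Set Pt), convexHull ℝ ({p, c, b'} : Set Pt), convexHull ℝ ({p, b', a} : Set Pt)], rfl, rfl, rfl, rfl, rfl, rfl, ?_, ?_⟩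
  · intro i j hij
    fin_cases i <;> fin_cases j <;>
      first
        | exact absurd rfl hij
        | assumption
  · apply Set.Subset.antisymm
    · apply Set.iUnion_subset
      intro i
      fin_cases i <;>
        · refine convexHull_min ?_ (convex_convexHull ℝ _)
          rintro w hw
          simp only [Set.mem_insert_iff, Set.mem_singleton_iff] at hw
          rcases hw with rfl | rfl | rfl <;> assumption
    · intro x hx
      have hxc : ∀ i, 0 ≤ B.coord i x := by
        rw [hhull] at hx
        exact hx
      have hx0 : 0 ≤ B.coord 0 x := hxc 0
      have hx1 : 0 ≤ B.coord 1 x := hxc 1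
      have hx2 : 0 ≤ B.coord 2 x := hxc 2
      have husum : B.coord 0 x + B.coord 1 x + B.coord 2 x = 1 := by
        have := B.sum_coord_apply_eq_one x
        rw [Fin.sum_univ_three] at this
        exact this
      have e2p : B.coord 2 p = 1 - B.coord 0 p - B.coord 1 p := by linear_combination hpsum
      have e2x : B.coord 2 x = 1 - B.coord 0 x - B.coord 1 x := by linear_combination husum
      have hne0 : B.coord 0 p ≠ 0 := hp0.ne'
      have hne1 : B.coord 1 p ≠ 0 := hp1.ne'
      have hne2 : B.coord 2 p ≠ 0 := hp2.ne'
      have hneq : 1 - B.coord 0 p - B.coord 1 p ≠ 0 := by rw [← e2p]; exact hp2.ne'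
      have hnem0 : 1 - B.coord 0 p ≠ 0 := hm0.ne'
      have hnem1 : 1 - B.coord 1 p ≠ 0 := hm1.ne'
      have hnem2 : 1 - B.coord 2 p ≠ 0 := hm2.ne'
      have hxrep : ∀ (X Y Z : Pt) (s t r : ℝ), s + t + r = 1 →
          B.coord 0 x = s * B.coord 0 X + t * B.coord 0 Y + r * B.coord 0 Z →
          B.coord 1 x = s * B.coord 1 X + t * B.coord 1 Y + r * B.coord 1 Z →
          B.coord 2 x = s * B.coord 2 X + t * B.coord 2 Y + r * B.coord 2 Z →
          x = s • X + t • Y + r • Z := by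
        intro X Y Z s t r hsum h0 h1 h2
        apply B.ext_elem
        intro i
        rw [aff_comb3 _ hsum]
        fin_cases i
        · exact h0
        · exact h1
        · exact h2
      rcases le_total ((B.coord 0 x / B.coord 0 p)) ((B.coord 1 x / B.coord 1 p)) with h01 | h01
      · rcases le_total ((B.coord 1 x / B.coord 1 p)) ((B.coord 2 x / B.coord 2 p)) with h12 | h12
        ·
          refine Set.mem_iUnion.2 ⟨3, ?_⟩
          show x ∈ convexHull ℝ ({p, a', c} : Set Pt)
          refine mem_hull3 ((B.coord 0 x / B.coord 0 p)) ((1 - B.coord 0 p) * ((B.coord 1 x / B.coord 1 p) - (B.coord 0 x / B.coord 0 p))) ((B.coord 2 p) * ((B.coord 2 x / B.coord 2 p) - (B.coord 1 x / B.coord 1 p))) ?_ ?_ ?_ ?_ ?_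
          · exact div_nonneg hx0 hp0.le
          · exact mul_nonneg hm0.le (sub_nonneg.2 h01)
          · exact mul_nonneg hp2.le (sub_nonneg.2 h12)
          · rw [e2p, e2x]
            field_simp
            ring
          · refine hxrep p a' c _ _ _ ?_ ?_ ?_ ?_
            · rw [e2p, e2x]
              field_simp
              ring
            · rw [hA0, h0c]
              field_simp
              ring
            · rw [hA1, h1c]
              field_simp
              ring
            · rw [hA2, h2c]
              field_simp
              ring
        · rcases le_total ((B.coord 0 x / B.coord 0 p)) ((B.coord 2 x / B.coord 2 p)) with h02 | h02
          ·
            refine Set.mem_iUnion.2 ⟨2, ?_⟩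
            show x ∈ convexHull ℝ ({p, b, a'} : Set Pt)
            refine mem_hull3 ((B.coord 0 x / B.coord 0 p)) ((B.coord 1 p) * ((B.coord 1 x / B.coord 1 p) - (B.coord 2 x / B.coord 2 p))) ((1 - B.coord 0 p) * ((B.coord 2 x / B.coord 2 p) - (B.coord 0 x / B.coord 0 p))) ?_ ?_ ?_ ?_ ?_
            · exact div_nonneg hx0 hp0.le
            · exact mul_nonneg hp1.le (sub_nonneg.2 h12)
            · exact mul_nonneg hm0.le (sub_nonneg.2 h02)
            · rw [e2p, e2x]
              field_simp
              ring
            · refine hxrep p b a' _ _ _ ?_ ?_ ?_ ?_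
              · rw [e2p, e2x]
                field_simp
                ring
              · rw [h0b, hA0]
                field_simp
                ring
              · rw [h1b, hA1]
                field_simp
                ring
              · rw [h2b, hA2]
                field_simp
                ring
          ·
            refine Set.mem_iUnion.2 ⟨1, ?_⟩
            show x ∈ convexHull ℝ ({p, c', b} : Set Pt)
            refine mem_hull3 ((B.coord 2 x / B.coord 2 p)) ((1 - B.coord 2 p) * ((B.coord 0 x / B.coord 0 p) - (B.coord 2 x / B.coord 2 p))) ((B.coord 1 p) * ((B.coord 1 x / B.coord 1 p) - (B.coord 0 x / B.coord 0 p))) ?_ ?_ ?_ ?_ ?_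
            · exact div_nonneg hx2 hp2.le
            · exact mul_nonneg hm2.le (sub_nonneg.2 h02)
            · exact mul_nonneg hp1.le (sub_nonneg.2 h01)
            · rw [e2p, e2x]
              field_simp
              ring
            · refine hxrep p c' b _ _ _ ?_ ?_ ?_ ?_
              · rw [e2p, e2x]
                field_simp
                ring
              · rw [hC0, h0b]
                field_simp
                ring
              · rw [hC1, h1b]
                field_simp
                ring
              · rw [hC2, h2b]
                field_simp
                ring
      · rcases le_total ((B.coord 1 x / B.coord 1 p)) ((B.coord 2 x / B.coord 2 p)) with h12 | h12
        · rcases le_total ((B.coord 0 x / B.coord 0 p)) ((B.coord 2 x / B.coord 2 p)) with h02 | h02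
          ·
            refine Set.mem_iUnion.2 ⟨4, ?_⟩
            show x ∈ convexHull ℝ ({p, c, b'} : Set Pt)
            refine mem_hull3 ((B.coord 1 x / B.coord 1 p)) ((B.coord 2 p) * ((B.coord 2 x / B.coord 2 p) - (B.coord 0 x / B.coord 0 p))) ((1 - B.coord 1 p) * ((B.coord 0 x / B.coord 0 p) - (B.coord 1 x / B.coord 1 p))) ?_ ?_ ?_ ?_ ?_
            · exact div_nonneg hx1 hp1.le
            · exact mul_nonneg hp2.le (sub_nonneg.2 h02)
            · exact mul_nonneg hm1.le (sub_nonneg.2 h01)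
            · rw [e2p, e2x]
              field_simp
              ring
            · refine hxrep p c b' _ _ _ ?_ ?_ ?_ ?_
              · rw [e2p, e2x]
                field_simp
                ring
              · rw [h0c, hB0]
                field_simp
                ring
              · rw [h1c, hB1]
                field_simp
                ring
              · rw [h2c, hB2]
                field_simp
                ring
          ·
            refine Set.mem_iUnion.2 ⟨5, ?_⟩
            show x ∈ convexHull ℝ ({p, b', a} : Set Pt)
            refine mem_hull3 ((B.coord 1 x / B.coord 1 p)) ((1 - B.coord 1 p) * ((B.coord 2 x / B.coord 2 p) - (B.coord 1 x / B.coord 1 p))) ((B.coord 0 p) * ((B.coord 0 x / B.coord 0 p) - (B.coord 2 x / B.coord 2 p))) ?_ ?_ ?_ ?_ ?_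
            · exact div_nonneg hx1 hp1.le
            · exact mul_nonneg hm1.le (sub_nonneg.2 h12)
            · exact mul_nonneg hp0.le (sub_nonneg.2 h02)
            · rw [e2p, e2x]
              field_simp
              ring
            · refine hxrep p b' a _ _ _ ?_ ?_ ?_ ?_
              · rw [e2p, e2x]
                field_simp
                ring
              · rw [hB0, h0a]
                field_simp
                ring
              · rw [hB1, h1a]
                field_simp
                ring
              · rw [hB2, h2a]
                field_simp
                ring
        ·
          refine Set.mem_iUnion.2 ⟨0, ?_⟩
          show x ∈ convexHull ℝ ({p, a, c'} : Set Pt)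
          refine mem_hull3 ((B.coord 2 x / B.coord 2 p)) ((B.coord 0 p) * ((B.coord 0 x / B.coord 0 p) - (B.coord 1 x / B.coord 1 p))) ((1 - B.coord 2 p) * ((B.coord 1 x / B.coord 1 p) - (B.coord 2 x / B.coord 2 p))) ?_ ?_ ?_ ?_ ?_
          · exact div_nonneg hx2 hp2.le
          · exact mul_nonneg hp0.le (sub_nonneg.2 h01)
          · exact mul_nonneg hm2.le (sub_nonneg.2 h12)
          · rw [e2p, e2x]
            field_simp
            ring
          · refine hxrep p a c' _ _ _ ?_ ?_ ?_ ?_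
            · rw [e2p, e2x]
              field_simp
              ring
            · rw [h0a, hC0]
              field_simp
              ring
            · rw [h1a, hC1]
              field_simp
              ring
            · rw [h2a, hC2]
              field_simp
              ring
end
end
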